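/- Under event ℰ', the size of the assignable user set satisfies (1−r)τ − 7r^{-1}·α^{1/3}·τ ≤ |P̂| ≤ (1−r)τ + α^{1/3}·τ. -/

import Mathlib

/-- A downward-closed finite set of naturals is an initial segment. -/
lemma aux_lowerset_eq_range (S : Finset ℕ) (h : ∀ i j : ℕ, i ≤ j → j ∈ S → i ∈ S) :
    S = Finset.range S.card := by
  ext i
  simp only [Finset.mem_range]
  constructor
  · intro hi
    have hsub : Finset.range (i + 1) ⊆ S := fun j hj =>
      h j i (Nat.lt_succ_iff.mp (Finset.mem_range.mp hj)) hi
    have := Finset.card_le_card hsub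
    simp at this; omega
  · intro hi
    by_contra hne
    have hsub : S ⊆ Finset.range i := by
      intro j hj
      simp only [Finset.mem_range]
      by_contra hji
      exact hne (h i j (by omega) hj)
    have := Finset.card_le_card hsub
    simp at this; omega

lemma aux_countP_zip_le_right (q : ℕ → Bool) : ∀ (l1 l2 : List ℕ),
    (l1.zip l2).countP (fun p => q p.2) ≤ l2.countP q
  | [], l2 => by simp
  | _ :: _, [] => by simp
  | a :: l1, b :: l2 => by
    have := aux_countP_zip_le_right q l1 l2
    by_cases hb : q b <;> simp [List.countP_cons, hb] <;> omega

lemma aux_countP_zip_le_left (q : ℕ → Bool) : ∀ (l1 l2 : List ℕ),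
    (l1.zip l2).countP (fun p => q p.1) ≤ l1.countP q
  | [], l2 => by simp
  | _ :: _, [] => by simp
  | a :: l1, b :: l2 => by
    have := aux_countP_zip_le_left q l1 l2
    by_cases ha : q a <;> simp [List.countP_cons, ha] <;> omega

lemma aux_zip_countP_bounds (P : ℕ → ℕ → Bool) (q : ℕ → Bool)
    (hq : ∀ x y : ℕ, x ≤ y → q y = true → q x = true)
    (h1 : ∀ x y : ℕ, q x = true → q y = true → P x y = true) :
    ∀ (lp lb : List ℕ), lp.Pairwise (· ≤ ·) → lb.Pairwise (· ≤ ·) →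
      (∀ x ∈ lp, ∀ y ∈ lb, P x y = true → q x = true ∨ q y = true) →
      min (lp.countP q) (lb.countP q) ≤ (lp.zip lb).countP (fun p => P p.1 p.2) ∧
        (lp.zip lb).countP (fun p => P p.1 p.2) ≤ max (lp.countP q) (lb.countP q) := by
  intro lp
  induction lp with
  | nil => intro lb _ _ _; simp
  | cons x lp ih =>
    intro lb hsp hsb h2
    cases lb with
    | nil => simp
    | cons y lb =>
      obtain ⟨hxle, hsp'⟩ := List.pairwise_cons.mp hsp
      obtain ⟨hyle, hsb'⟩ := List.pairwise_cons.mp hsb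
      by_cases hx : q x = true
      · by_cases hy : q y = true
        · have hP : P x y = true := h1 _ _ hx hy
          obtain ⟨ihl, ihr⟩ := ih lb hsp' hsb'
            (fun a ha b hb => h2 a (List.mem_cons_of_mem _ ha) b (List.mem_cons_of_mem _ hb))
          simp only [List.zip_cons_cons, List.countP_cons, hP, hx, hy, if_true]
          omega
        · have hb0 : (y :: lb).countP q = 0 := by
            rw [List.countP_eq_zero]
            intro z hz
            rcases List.mem_cons.mp hz with hz | hz
            · subst hz; simpa using hy
            · intro hqz; exact hy (hq y z (hyle z hz) hqz)
          have hle : ((x :: lp).zip (y :: lb)).countP (fun p => P p.1 p.2) ≤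
              (x :: lp).countP q := by
            refine le_trans (List.countP_mono_left ?_) (aux_countP_zip_le_left q _ _)
            rintro ⟨a, b⟩ hab hPab
            obtain ⟨ha, hb⟩ := List.of_mem_zip hab
            rcases h2 a ha b hb hPab with h | h
            · exact h
            · exfalso
              rcases List.mem_cons.mp hb with hb' | hb'
              · subst hb'; exact hy h
              · exact hy (hq y b (hyle b hb') h)
          constructor
          · simp [hb0]
          · exact le_max_of_le_left hle
      · have ha0 : (x :: lp).countP q = 0 := by
          rw [List.countP_eq_zero]
          intro z hz
          rcases List.mem_cons.mp hz with hz | hz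
          · subst hz; simpa using hx
          · intro hqz; exact hx (hq x z (hxle z hz) hqz)
        have hle : ((x :: lp).zip (y :: lb)).countP (fun p => P p.1 p.2) ≤
            (y :: lb).countP q := by
          refine le_trans (List.countP_mono_left ?_) (aux_countP_zip_le_right q _ _)
          rintro ⟨a, b⟩ hab hPab
          obtain ⟨ha, hb⟩ := List.of_mem_zip hab
          rcases h2 a ha b hb hPab with h | h
          · exfalso
            rcases List.mem_cons.mp ha with ha' | ha'
            · subst ha'; exact hx h
            · exact hx (hq x a (hxle a ha') h)
          · exact h
        constructor
        · simp [ha0]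
        · exact le_max_of_le_right hle

lemma aux_countP_sort (s : Finset ℕ) (p : ℕ → Prop) [DecidablePred p] :
    (s.sort (· ≤ ·)).countP (fun x => decide (p x)) = (s.filter p).card := by
  rw [(s.sort_perm_toList (· ≤ ·)).countP_eq]
  have h1 : (s.filter p).card = Multiset.card (s.val.filter p) := rfl
  rw [h1, ← Multiset.countP_eq_card_filter]
  have h2 : (s.toList : Multiset ℕ) = s.val := s.coe_toList
  rw [← h2, Multiset.coe_countP]

lemma aux_arith1 (r ε τ s A : ℝ) (hr : 0 < r) (hε : 0 ≤ ε) (hτ : 0 < τ)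
    (hs0 : 0 ≤ s) (hA0 : 0 ≤ A)
    (hsle : s ≤ r * τ + ε * τ) (hAge : r * τ - ε * τ ≤ A) :
    (1 - 2 * r⁻¹ * ε) * s ≤ A := by
  have hinv : r * r⁻¹ = 1 := mul_inv_cancel₀ hr.ne'
  rcases le_or_gt (1 - 2 * r⁻¹ * ε) 0 with hsign | hsign
  · nlinarith
  · nlinarith [mul_nonneg (mul_nonneg (inv_nonneg.mpr hr.le) hε) (mul_nonneg hε hτ.le),
      mul_le_mul_of_nonneg_left hsle hsign.le]

lemma aux_arith2 (r ε τ s k Ck : ℝ) (hr : 0 < r) (hr2 : r ≤ 1/2) (hε : 0 ≤ ε) (hτ : 0 < τ)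
    (hετ : 1 ≤ ε * τ) (h7 : 7 * ε < r)
    (hk : k < (1 - 6 * r⁻¹ * ε) * τ + 1)
    (hCk : Ck ≤ r * k + ε * τ)
    (hsge : r * τ - ε * τ ≤ s) :
    Ck < (1 - 2 * r⁻¹ * ε) * s := by
  have hinv : r * r⁻¹ = 1 := mul_inv_cancel₀ hr.ne'
  have hx : r⁻¹ * ε < 1/7 := by
    have := mul_lt_mul_of_pos_left h7 (inv_pos.mpr hr)
    nlinarith [inv_pos.mpr hr, hinv]
  have hx0 : 0 ≤ r⁻¹ * ε := mul_nonneg (inv_nonneg.mpr hr.le) hε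
  have h1 : r * k < r * τ - 6 * ε * τ + r := by
    have := mul_lt_mul_of_pos_left hk hr
    nlinarith
  have hsign : 0 < 1 - 2 * (r⁻¹ * ε) := by linarith
  have h2 : (1 - 2 * r⁻¹ * ε) * (r * τ - ε * τ) ≤ (1 - 2 * r⁻¹ * ε) * s := by
    apply mul_le_mul_of_nonneg_left hsge
    nlinarith
  have h3 : r * τ - 3 * ε * τ + 2 * (r⁻¹ * ε) * (ε * τ) ≤
      (1 - 2 * r⁻¹ * ε) * (r * τ - ε * τ) := by
    nlinarith [mul_nonneg hx0 (mul_nonneg hε hτ.le)]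
  nlinarith [mul_nonneg hx0 (mul_nonneg hε hτ.le)]

/-- Size of the canonical assignment restricted to users `PT` and slots `BT`
(indices sorted increasingly = increasing cost / decreasing value order). -/
noncomputable def canonSize (c v : ℕ → ℝ) (PT BT : Finset ℕ) : ℕ :=
  (List.zip ((PT.sort (· ≤ ·)).map c) ((BT.sort (· ≤ ·)).map v)).countP
    (fun x => decide (x.1 < x.2))

/-- Under event `ℰ'`, the size of the assignable user set
`P̂ = {p ∈ P(M∖M_T) : c p < c p̂}` satisfies
`(1−r)τ − 7r⁻¹·α^{1/3}·τ ≤ |P̂| ≤ (1−r)τ + α^{1/3}·τ`. -/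
theorem stmt_13 (n m : ℕ) (c v : ℕ → ℝ)
    (hc : StrictMono c) (hv : StrictAnti v)
    (hcv : ∀ i j : ℕ, c i ≠ v j)
    (PT BT : Finset ℕ) (hPT : PT ⊆ Finset.range n) (hBT : BT ⊆ Finset.range m)
    (r α : ℝ) (hr : 0 < r) (hr2 : r ≤ 1 / 2)
    (Po : Finset ℕ)
    (hPo : Po = (Finset.range (min n m)).filter (fun i => c i < v i))
    (τ : ℕ) (hτ : τ = Po.card) (hτpos : 0 < τ)
    (hα : 1 / (τ : ℝ) ≤ α) (hα1 : α ≤ 1)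
    (s : ℕ) (hs : s = canonSize c v PT BT)
    (L : ℕ) (hL : L = ⌈(1 - 2 * r⁻¹ * α ^ ((1 : ℝ) / 3)) * (s : ℝ)⌉₊)
    (hLpos : 0 < L)
    (phat : ℕ) (hphat₁ : phat ∈ PT)
    (hphat₂ : (PT.filter (fun q => q ≤ phat)).card = L)
    (k : ℕ) (hk : k = ⌈(1 - 6 * r⁻¹ * α ^ ((1 : ℝ) / 3)) * (τ : ℝ)⌉₊)
    (hE1 : |((Po ∩ PT).card : ℝ) - r * τ| ≤ α ^ ((1 : ℝ) / 3) * τ)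
    (hE2 : |((Po ∩ BT).card : ℝ) - r * τ| ≤ α ^ ((1 : ℝ) / 3) * τ)
    (hE3 : |((Finset.range k ∩ PT).card : ℝ) - r * k| ≤ α ^ ((1 : ℝ) / 3) * τ)
    (hE4 : |((Finset.range k ∩ BT).card : ℝ) - r * k| ≤ α ^ ((1 : ℝ) / 3) * τ)
    (Phat : Finset ℕ)
    (hPhat : Phat = (Finset.range n).filter (fun p => p ∉ PT ∧ c p < c phat)) :
    (1 - r) * τ - 7 * r⁻¹ * α ^ ((1 : ℝ) / 3) * τ ≤ (Phat.card : ℝ) ∧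
      (Phat.card : ℝ) ≤ (1 - r) * τ + α ^ ((1 : ℝ) / 3) * τ := by
  set ε : ℝ := α ^ ((1 : ℝ) / 3) with hεdef
  -- basic real facts
  have hτR : (0 : ℝ) < τ := by exact_mod_cast hτpos
  have hα0 : 0 < α := lt_of_lt_of_le (by positivity) hα
  have hε0 : 0 ≤ ε := Real.rpow_nonneg hα0.le _
  have hετ : 1 ≤ ε * τ := by
    have h1τ : (1 / τ : ℝ) ≤ 1 := by
      rw [div_le_one hτR]; exact_mod_cast hτpos
    have h2 : (1 / τ : ℝ) ^ (1 : ℝ) ≤ (1 / τ : ℝ) ^ ((1 : ℝ) / 3) :=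
      Real.rpow_le_rpow_of_exponent_ge (by positivity) h1τ (by norm_num)
    have h3 : (1 / τ : ℝ) ^ ((1 : ℝ) / 3) ≤ ε :=
      Real.rpow_le_rpow (by positivity) hα (by norm_num)
    have h4 : (1 / τ : ℝ) ≤ ε := by
      rw [Real.rpow_one] at h2; linarith
    calc (1 : ℝ) = (1 / τ) * τ := by field_simp
      _ ≤ ε * τ := mul_le_mul_of_nonneg_right h4 hτR.le
  -- `Po` is an initial segment
  have hPo' : Po = Finset.range τ := by
    rw [hτ]
    apply aux_lowerset_eq_range
    intro i j hij hj
    rw [hPo] at hj ⊢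
    simp only [Finset.mem_filter, Finset.mem_range] at hj ⊢
    exact ⟨lt_of_le_of_lt hij hj.1,
      lt_of_le_of_lt (hc.monotone hij) (lt_of_lt_of_le hj.2 (hv.antitone hij))⟩
  have hτmm : τ ≤ min n m := by
    have hsub : Finset.range τ ⊆ Finset.range (min n m) := by
      rw [← hPo', hPo]; exact Finset.filter_subset _ _
    exact Finset.range_subset_range.mp hsub
  have hlt1 : ∀ x y : ℕ, x < τ → y < τ → c x < v y := by
    intro x y hx hy
    have hmem : max x y ∈ Po := by rw [hPo']; simp only [Finset.mem_range]; omega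
    rw [hPo] at hmem
    simp only [Finset.mem_filter, Finset.mem_range] at hmem
    exact lt_of_le_of_lt (hc.monotone (le_max_left x y))
      (lt_of_lt_of_le hmem.2 (hv.antitone (le_max_right x y)))
  have hlt2 : ∀ x y : ℕ, x < n → y < m → c x < v y → x < τ ∨ y < τ := by
    intro x y hx hy hcxy
    by_contra hcon
    push_neg at hcon
    obtain ⟨hτx, hτy⟩ := hcon
    have hwmm : min x y < min n m := by omega
    have hwPo : min x y ∉ Po := by rw [hPo']; simp only [Finset.mem_range]; omega
    have hnlt : ¬ (c (min x y) < v (min x y)) := by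
      intro hlt
      exact hwPo (by
        rw [hPo]; simp only [Finset.mem_filter, Finset.mem_range]; exact ⟨hwmm, hlt⟩)
    have hvw : v (min x y) < c (min x y) :=
      lt_of_le_of_ne (not_lt.mp hnlt) (Ne.symm (hcv _ _))
    have h1 : c (min x y) ≤ c x := hc.monotone (by omega)
    have h2 : v y ≤ v (min x y) := hv.antitone (by omega)
    linarith
  -- the matching-count bounds
  obtain ⟨hmin, hmax⟩ :=
    aux_zip_countP_bounds (fun x y => decide (c x < v y)) (fun x => decide (x < τ))
      (by
        intro x y hxy hqy
        simp only [decide_eq_true_eq] at hqy ⊢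
        omega)
      (by
        intro x y hqx hqy
        simp only [decide_eq_true_eq] at hqx hqy ⊢
        exact hlt1 x y hqx hqy)
      (PT.sort (· ≤ ·)) (BT.sort (· ≤ ·))
      (Finset.pairwise_sort _ _) (Finset.pairwise_sort _ _)
      (by
        intro x hx y hy hP
        simp only [decide_eq_true_eq] at hP ⊢
        rw [Finset.mem_sort] at hx hy
        have hxn : x < n := Finset.mem_range.mp (hPT hx)
        have hym : y < m := Finset.mem_range.mp (hBT hy)
        exact hlt2 x y hxn hym hP)
  -- rewrite the list counts as intersection cardinalities
  have hcountPT : (PT.sort (· ≤ ·)).countP (fun x => decide (x < τ)) = (Po ∩ PT).card := by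
    rw [aux_countP_sort PT (fun x => x < τ)]
    congr 1
    rw [hPo']
    ext a
    simp only [Finset.mem_filter, Finset.mem_inter, Finset.mem_range]
    tauto
  have hcountBT : (BT.sort (· ≤ ·)).countP (fun x => decide (x < τ)) = (Po ∩ BT).card := by
    rw [aux_countP_sort BT (fun x => x < τ)]
    congr 1
    rw [hPo']
    ext a
    simp only [Finset.mem_filter, Finset.mem_inter, Finset.mem_range]
    tauto
  have hs2 : s = ((PT.sort (· ≤ ·)).zip (BT.sort (· ≤ ·))).countP
      (fun p => decide (c p.1 < v p.2)) := by
    rw [hs]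
    unfold canonSize
    rw [List.zip_map, List.countP_map]
    congr 1
  rw [hcountPT, hcountBT] at hmin hmax
  rw [← hs2] at hmin hmax
  set A : ℕ := (Po ∩ PT).card with hA
  set B : ℕ := (Po ∩ BT).card with hB
  set Ck : ℕ := (Finset.range k ∩ PT).card with hCk
  -- real bounds from the event hypotheses
  obtain ⟨hA1, hA2⟩ := abs_le.mp hE1
  obtain ⟨hB1, hB2⟩ := abs_le.mp hE2
  obtain ⟨hC1, hC2⟩ := abs_le.mp hE3
  have hsleR : (s : ℝ) ≤ r * τ + ε * τ := by
    have h1 : (s : ℝ) ≤ max (A : ℝ) (B : ℝ) := by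
      have : (s : ℝ) ≤ ((max A B : ℕ) : ℝ) := by exact_mod_cast hmax
      simpa [Nat.cast_max] using this
    have h2 : max (A : ℝ) (B : ℝ) ≤ r * τ + ε * τ :=
      max_le (by linarith) (by linarith)
    linarith
  have hsgeR : r * τ - ε * τ ≤ (s : ℝ) := by
    have h1 : min (A : ℝ) (B : ℝ) ≤ (s : ℝ) := by
      have : ((min A B : ℕ) : ℝ) ≤ (s : ℝ) := by exact_mod_cast hmin
      simpa [Nat.cast_min] using this
    have h2 : r * τ - ε * τ ≤ min (A : ℝ) (B : ℝ) :=
      le_min (by linarith) (by linarith)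
    linarith
  -- L ≤ A, hence phat < τ
  have hLA : L ≤ A := by
    rw [hL]
    apply Nat.ceil_le.mpr
    exact aux_arith1 r ε τ s A hr hε0 hτR (by positivity) (Nat.cast_nonneg _) hsleR (by linarith)
  have hphatτ : phat < τ := by
    by_contra hcontra
    push_neg at hcontra
    have hss : insert phat (Po ∩ PT) ⊆ PT.filter (fun q => q ≤ phat) := by
      intro a ha
      rcases Finset.mem_insert.mp ha with ha | ha
      · subst ha; simp only [Finset.mem_filter]; exact ⟨hphat₁, le_refl _⟩
      · rw [hPo'] at ha
        obtain ⟨ha1, ha2⟩ := Finset.mem_inter.mp ha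
        simp only [Finset.mem_filter]
        exact ⟨ha2, by have := Finset.mem_range.mp ha1; omega⟩
    have hninsert : phat ∉ Po ∩ PT := by
      rw [hPo']
      simp only [Finset.mem_inter, Finset.mem_range]
      omega
    have hcard := Finset.card_le_card hss
    rw [Finset.card_insert_of_notMem hninsert, hphat₂] at hcard
    omega
  -- description of Phat
  have hphatn : phat < n := Finset.mem_range.mp (hPT hphat₁)
  have hPhat' : Phat = Finset.range phat \ PT := by
    rw [hPhat]
    ext p
    simp only [Finset.mem_filter, Finset.mem_range, Finset.mem_sdiff]
    constructor
    · rintro ⟨-, hnp, hcp⟩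
      exact ⟨hc.lt_iff_lt.mp hcp, hnp⟩
    · rintro ⟨hp, hnp⟩
      exact ⟨lt_trans hp hphatn, hnp, hc hp⟩
  -- upper bound
  have hup : (Phat.card : ℝ) ≤ (1 - r) * τ + ε * τ := by
    have hsub : Phat ⊆ Finset.range τ \ PT := by
      rw [hPhat']
      exact Finset.sdiff_subset_sdiff (Finset.range_subset_range.mpr hphatτ.le) (le_refl PT)
    have hcle : Phat.card ≤ (Finset.range τ \ PT).card := Finset.card_le_card hsub
    have hid : (Finset.range τ ∩ PT).card + (Finset.range τ \ PT).card = τ := by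
      rw [Finset.card_inter_add_card_sdiff, Finset.card_range]
    have hAeq : (Finset.range τ ∩ PT).card = A := by rw [hA, hPo']
    rw [hAeq] at hid
    have hidR : (A : ℝ) + ((Finset.range τ \ PT).card : ℝ) = τ := by exact_mod_cast hid
    have hcleR : (Phat.card : ℝ) ≤ ((Finset.range τ \ PT).card : ℝ) := by exact_mod_cast hcle
    linarith
  refine ⟨?_, by linarith [hup]⟩
  -- lower bound
  rcases le_or_gt ((1 - r) * τ - 7 * r⁻¹ * ε * τ) 0 with hcase | hcase
  · have : (0 : ℝ) ≤ (Phat.card : ℝ) := Nat.cast_nonneg _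
    linarith
  · -- nontrivial case: ε is small
    have hinv : r * r⁻¹ = 1 := mul_inv_cancel₀ hr.ne'
    have hinv0 : 0 ≤ r⁻¹ := inv_nonneg.mpr hr.le
    have h7a : 7 * r⁻¹ * ε * τ < (1 - r) * τ := by linarith
    have h7b : 7 * (r⁻¹ * ε) < 1 - r := by
      have := (mul_lt_mul_iff_left₀ hτR).mp h7a
      linarith
    have h7 : 7 * ε < r := by
      have h := mul_lt_mul_of_pos_left (h7b.trans_le (by linarith : (1:ℝ) - r ≤ 1)) hr
      have he : r * (7 * (r⁻¹ * ε)) = 7 * (r * r⁻¹) * ε := by ring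
      rw [he, hinv] at h
      linarith
    have hkup : (k : ℝ) < (1 - 6 * r⁻¹ * ε) * τ + 1 := by
      rw [hk]
      apply Nat.ceil_lt_add_one
      have h60 : 0 ≤ r⁻¹ * ε := mul_nonneg hinv0 hε0
      have h61 : (0:ℝ) ≤ 1 - 6 * r⁻¹ * ε := by linarith
      exact mul_nonneg h61 hτR.le
    have hkdown : (1 - 6 * r⁻¹ * ε) * τ ≤ (k : ℝ) := by
      rw [hk]; exact Nat.le_ceil _
    -- Ck < L
    have hCkL : Ck < L := by
      rw [hL]
      apply Nat.lt_ceil.mpr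
      exact aux_arith2 r ε τ s k Ck hr hr2 hε0 hτR hετ h7 hkup (by linarith) hsgeR
    -- k ≤ phat
    have hkphat : k ≤ phat := by
      by_contra hcontra
      push_neg at hcontra
      have hss : PT.filter (fun q => q ≤ phat) ⊆ Finset.range k ∩ PT := by
        intro a ha
        obtain ⟨ha1, ha2⟩ := Finset.mem_filter.mp ha
        exact Finset.mem_inter.mpr ⟨Finset.mem_range.mpr (by omega), ha1⟩
      have := Finset.card_le_card hss
      rw [hphat₂] at this
      omega
    have hsub : Finset.range k \ PT ⊆ Phat := by
      rw [hPhat']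
      exact Finset.sdiff_subset_sdiff (Finset.range_subset_range.mpr hkphat) (le_refl PT)
    have hcle : (Finset.range k \ PT).card ≤ Phat.card := Finset.card_le_card hsub
    have hid : Ck + (Finset.range k \ PT).card = k := by
      rw [hCk, Finset.card_inter_add_card_sdiff, Finset.card_range]
    have hidR : (Ck : ℝ) + ((Finset.range k \ PT).card : ℝ) = k := by exact_mod_cast hid
    have hcleR : ((Finset.range k \ PT).card : ℝ) ≤ (Phat.card : ℝ) := by exact_mod_cast hcle
    -- numeric finish
    have h1r : (0 : ℝ) ≤ 1 - r := by linarith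
    have hfin : (1 - r) * τ - 7 * r⁻¹ * ε * τ ≤ (k : ℝ) - (r * k + ε * τ) := by
      have hmul : (1 - r) * ((1 - 6 * r⁻¹ * ε) * τ) ≤ (1 - r) * (k : ℝ) :=
        mul_le_mul_of_nonneg_left hkdown h1r
      have hexp : (1 - r) * ((1 - 6 * r⁻¹ * ε) * τ) =
          (1 - r) * τ - 6 * (r⁻¹ * ε) * τ + 6 * ε * τ := by
        linear_combination (6 * ε * (τ:ℝ)) * hinv
      have hpos1 : 0 ≤ r⁻¹ * ε * τ := mul_nonneg (mul_nonneg hinv0 hε0) hτR.le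
      have hpos2 : 0 ≤ ε * τ := mul_nonneg hε0 hτR.le
      rw [hexp] at hmul
      linarith
    linarith
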